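/- arXiv:2211.07923 — 5 statements merged into one kernel-verified Lean document; each statement's English description precedes it below -/
import Mathlib

section
/- Let F = (f_1, ..., f_n) be an n-node deterministic DT-BFDS that updates in parallel, where every f_i is a positive unary function (i.e., there is a map σ : Fin n → Fin n with f_i(c) = c(σ(i))). Define the (2n)-node sequential system G on configurations of length 2n that, in order, first updates nodes n+1,...,2n by setting node (n+i) to f_i applied to the states of nodes 1..n, and then updates nodes 1,...,n by copying from nodes n+1,...,2n. Then for all configurations c of F and all t ≥ 0, applying G for t steps to the doubled configuration c·c yields (F^[t] c)·(F^[t] c). In particular, G simulates F with edge expansion rate 1. -/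
/-- The doubled configuration `c·c`. -/
def dbl {n : ℕ} (c : Fin n → Bool) : Fin n ⊕ Fin n → Bool := Sum.elim c c

/-- First phase of the sequential system `G`: update the second-half nodes
`n+1, …, 2n`, setting node `n+i` to `f_i` applied to the first-half states. -/
def seqStep1 {n : ℕ} (σ : Fin n → Fin n) (c : Fin n ⊕ Fin n → Bool) :
    Fin n ⊕ Fin n → Bool :=
  Sum.elim (fun i => c (Sum.inl i)) (fun i => c (Sum.inl (σ i)))

/-- Second phase of the sequential system `G`: update nodes `1, …, n`
by copying from nodes `n+1, …, 2n`. -/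
def seqStep2 {n : ℕ} (c : Fin n ⊕ Fin n → Bool) : Fin n ⊕ Fin n → Bool :=
  Sum.elim (fun i => c (Sum.inr i)) (fun i => c (Sum.inr i))

theorem stmt_7 (n : ℕ) (σ : Fin n → Fin n)
    (F : (Fin n → Bool) → (Fin n → Bool)) (hF : ∀ c i, F c i = c (σ i))
    (G : (Fin n ⊕ Fin n → Bool) → (Fin n ⊕ Fin n → Bool))
    (hG : ∀ c, G c = seqStep2 (seqStep1 σ c)) :
    ∀ (t : ℕ) (c : Fin n → Bool), G^[t] (dbl c) = dbl (F^[t] c) := by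
  intro t
  induction t with
  | zero => intro c; simp
  | succ t ih =>
    intro c
    rw [Function.iterate_succ_apply, Function.iterate_succ_apply, hG]
    have : seqStep2 (seqStep1 σ (dbl c)) = dbl (F c) := by
      funext x
      cases x <;> simp [seqStep1, seqStep2, dbl, hF]
    rw [this, ih]
end

section
/- Let F = {f_{i,j} : i ∈ [n], j ∈ [k]} be an (n,k) multiple-choice DT-BFDS in which every f_{i,j} is a unary function (positive or negative) of a single variable. Define the doubled system G on 2n nodes using only positive unary functions as follows: if f_{i,j}(x) = x_ℓ then node i of G reads node ℓ and node n+i reads node n+ℓ; if f_{i,j}(x) = ¬x_ℓ then node i of G reads node n+ℓ and node n+i reads node ℓ. Let ν(c) = c·c' where c' is the bitwise negation of c. Then for every function-index selection J ∈ [k]^n, one parallel step of F with selection J on c corresponds exactly to one parallel step of G with selection J on ν(c); i.e., ν(F[J](c)) = G[J](ν(c)). -/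
theorem stmt_8 (n k : ℕ)
    -- the source node and the sign (`true` = negative unary) of each choice function
    (src : Fin n → Fin k → Fin n) (neg : Fin n → Fin k → Bool)
    -- one parallel step of `F` with function selection `J`
    (Fstep : (Fin n → Fin k) → (Fin n → Bool) → (Fin n → Bool))
    (hF : ∀ J c i, Fstep J c i =
      if neg i (J i) then !c (src i (J i)) else c (src i (J i)))
    -- one parallel step of the doubled positive-unary system `G` with selection `J`
    (Gstep : (Fin n → Fin k) → (Fin n ⊕ Fin n → Bool) → (Fin n ⊕ Fin n → Bool))
    (hGl : ∀ J d i, Gstep J d (Sum.inl i) =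
      if neg i (J i) then d (Sum.inr (src i (J i))) else d (Sum.inl (src i (J i))))
    (hGr : ∀ J d i, Gstep J d (Sum.inr i) =
      if neg i (J i) then d (Sum.inl (src i (J i))) else d (Sum.inr (src i (J i))))
    -- the embedding ν(c) = c·c' with c' the bitwise negation of c
    (ν : (Fin n → Bool) → (Fin n ⊕ Fin n → Bool))
    (hν : ∀ c, ν c = Sum.elim c (fun i => !c i)) :
    ∀ (J : Fin n → Fin k) (c : Fin n → Bool), ν (Fstep J c) = Gstep J (ν c) := by
  intro J c
  funext x
  cases x with
  | inl i => simp [hν, hGl, hF]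
  | inr i => simp [hν, hGr, hF]; split <;> simp
end

section
/- Consider n ≥ 4 nodes with state variables x_1, ..., x_n and the 2-choice unary system with individual function selection and parallel updates where: for 3 ≤ i ≤ n both choices for node i copy x_{i-1}; node 1 can copy either x_1 or x_n; node 2 can copy either x_n or x_1. Then for any two configurations c and d that are each neither all-zeros nor all-ones, d is reachable from c by some finite sequence of update steps (each step choosing one function per node and updating all nodes in parallel). Moreover, the all-zeros and all-ones configurations are fixed under every choice of updates. -/
private def nxt (n : ℕ) (a0 a1 : Bool) (c : Fin n → Bool) : Fin n → Bool :=
  fun i => if i.val = 0 then a0 else if i.val = 1 then a1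
    else c ⟨i.val - 1, Nat.lt_of_le_of_lt (Nat.sub_le _ _) i.2⟩

private def rotf (n : ℕ) [NeZero n] (c : Fin n → Bool) : Fin n → Bool :=
  fun i => c (i - 1)

private def mm (n : ℕ) (c : Fin n → Bool) : ℕ := ∑ i : Fin n, (c i).toNat

open Fin.NatCast in
private lemma aux_neg (n : ℕ) [NeZero n] (a : Fin n) : ((n - a.val : ℕ) : Fin n) = -a := by
  have h2 : ((n - a.val : ℕ) : Fin n) + ((a.val : ℕ) : Fin n) = 0 := by
    rw [← Nat.cast_add]
    have h3 : n - a.val + a.val = n := by omega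
    rw [h3, Fin.natCast_self]
  rw [Fin.cast_val_eq_self] at h2
  exact eq_neg_of_add_eq_zero_left h2

private lemma aux_sub_one (n : ℕ) (hn : 2 ≤ n) [NeZero n] (i : Fin n) :
    (i - 1 : Fin n).val = if i.val = 0 then n - 1 else i.val - 1 := by
  have h1 : (1 : Fin n).val = 1 := by
    rw [Fin.val_one' n]; exact Nat.mod_eq_of_lt (by omega)
  rw [Fin.sub_def]
  show (n - (1:Fin n).val + i.val) % n = _
  rw [h1]
  have hi := i.2
  split <;> rename_i h
  · rw [h, Nat.add_zero, Nat.mod_eq_of_lt (by omega)]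
  · have h2 : n - 1 + i.val = (i.val - 1) + n := by omega
    rw [h2, Nat.add_mod_right, Nat.mod_eq_of_lt (by omega)]

open Fin.NatCast in
private lemma aux_iter (n : ℕ) [NeZero n] (k : ℕ) (c : Fin n → Bool) (i : Fin n) :
    (rotf n)^[k] c i = c (i - (k : Fin n)) := by
  induction k generalizing i with
  | zero => simp
  | succ k ih =>
    rw [Function.iterate_succ_apply']
    show (rotf n)^[k] c (i - 1) = _
    rw [ih, Nat.cast_add_one, sub_sub, add_comm]

private lemma aux_shift (n : ℕ) [NeZero n] (c : Fin n → Bool) (t : Fin n) :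
    mm n (fun i => c (i - t)) = mm n c := by
  exact Fintype.sum_equiv (Equiv.subRight t) _ _ (fun i => rfl)

private lemma aux_one_le (n : ℕ) (c : Fin n → Bool) (i : Fin n) (h : c i = true) :
    1 ≤ mm n c := by
  have : (c i).toNat = 1 := by rw [h]; rfl
  calc 1 = (c i).toNat := this.symm
    _ ≤ mm n c := Finset.single_le_sum (f := fun j => (c j).toNat)
      (fun j _ => Nat.zero_le _) (Finset.mem_univ i)

private lemma aux_exists_true (n : ℕ) (c : Fin n → Bool) (h : 1 ≤ mm n c) :
    ∃ i, c i = true := by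
  by_contra hc
  push_neg at hc
  have : mm n c = 0 := by
    unfold mm
    apply Finset.sum_eq_zero
    intro i _
    have := hc i
    simp [Bool.not_eq_true] at this
    rw [this]; rfl
  omega

private lemma aux_unique (n : ℕ) (c : Fin n → Bool) (h : mm n c = 1) (p q : Fin n)
    (hp : c p = true) (hq : c q = true) : p = q := by
  by_contra hne
  have hsub : ({p, q} : Finset (Fin n)) ⊆ Finset.univ := Finset.subset_univ _
  have h2 : ∑ i ∈ ({p, q} : Finset (Fin n)), (c i).toNat ≤ mm n c :=
    Finset.sum_le_sum_of_subset hsub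
  rw [Finset.sum_pair hne, hp, hq] at h2
  simp at h2
  omega

open Fin.NatCast in
private lemma aux_adj (n : ℕ) [NeZero n] (c : Fin n → Bool) (p q : Fin n)
    (hp : c p = true) (hq : c q = false) :
    ∃ j : Fin n, c j = true ∧ c (j + 1) = false := by
  by_contra hc
  push_neg at hc
  have hstep : ∀ j : Fin n, c j = true → c (j + 1) = true := by
    intro j hj
    have := hc j hj
    simpa [Bool.not_eq_false] using this
  have hall : ∀ k : ℕ, c (p + (k : Fin n)) = true := by
    intro k
    induction k with
    | zero => simpa using hp
    | succ k ih =>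
      have := hstep _ ih
      rw [Nat.cast_add_one, ← add_assoc]
      exact this
  have := hall ((q - p).val)
  rw [Fin.cast_val_eq_self, add_comm, sub_add_cancel] at this
  rw [this] at hq
  exact absurd hq (by simp)

private lemma aux_drop (n : ℕ) (hn : 4 ≤ n) (c : Fin n → Bool)
    (h0 : c ⟨0, by linarith⟩ = false) (hl : c ⟨n - 1, by simp; linarith⟩ = true) :
    mm n (nxt n false false c) + 1 = mm n c := by
  obtain ⟨N, rfl⟩ : ∃ N, n = N + 2 := ⟨n - 2, by omega⟩
  have key : ∀ (e : Fin (N+2) → Bool), mm (N+2) e =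
      ∑ i ∈ Finset.range (N+2), (if h : i < N+2 then (e ⟨i, h⟩).toNat else 0) := by
    intro e
    unfold mm
    rw [← Fin.sum_univ_eq_sum_range (fun i => if h : i < N+2 then (e ⟨i, h⟩).toNat else 0) (N+2)]
    apply Finset.sum_congr rfl
    intro i _
    rw [dif_pos i.2]
  set d := nxt (N+2) false false c with hd
  have hgd0 : d ⟨0, by omega⟩ = false := by simp [hd, nxt]
  have hgd1 : d ⟨1, by omega⟩ = false := by simp [hd, nxt]
  rw [key c, key d]
  rw [Finset.sum_range_succ' (fun i => if h : i < N+2 then (d ⟨i, h⟩).toNat else 0) (N+1),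
      Finset.sum_range_succ' (fun i => if h : i + 1 < N+2 then (d ⟨i+1, h⟩).toNat else 0) N]
  rw [Finset.sum_range_succ (fun i => if h : i < N+2 then (c ⟨i, h⟩).toNat else 0) (N+1),
      Finset.sum_range_succ' (fun i => if h : i < N+2 then (c ⟨i, h⟩).toNat else 0) N]
  have e0 : (if h : 0 < N+2 then (c ⟨0, h⟩).toNat else 0) = 0 := by
    rw [dif_pos (by omega)]
    have : c ⟨0, by omega⟩ = false := h0
    rw [this]; rfl
  have e1 : (if h : (N+1) < N+2 then (c ⟨N+1, h⟩).toNat else 0) = 1 := by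
    rw [dif_pos (by omega)]
    have hx : c ⟨N+1, by omega⟩ = true := by
      rw [show (⟨N+1, by omega⟩ : Fin (N+2)) = ⟨N+2-1, by omega⟩ from Fin.mk_eq_mk.mpr (by omega)]
      exact hl
    rw [hx]; rfl
  have f0 : (if h : 0 < N+2 then (d ⟨0, h⟩).toNat else 0) = 0 := by
    rw [dif_pos (by omega)]; rw [hgd0]; rfl
  have f1 : (if h : 0+1 < N+2 then (d ⟨0+1, h⟩).toNat else 0) = 0 := by
    rw [dif_pos (by omega)]; rw [show (⟨0+1, by omega⟩ : Fin (N+2)) = ⟨1, by omega⟩ from rfl, hgd1]; rfl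
  have fmain : ∀ i ∈ Finset.range N,
      (if h : i+1+1 < N+2 then (d ⟨i+1+1, h⟩).toNat else 0)
      = (if h : i+1 < N+2 then (c ⟨i+1, h⟩).toNat else 0) := by
    intro i hi
    simp only [Finset.mem_range] at hi
    have hthis : d ⟨i+1+1, by omega⟩ = c ⟨i+1, by omega⟩ := by
      show (if i+1+1 = 0 then false else if i+1+1 = 1 then false
        else c ⟨i+1+1-1, by omega⟩) = _
      rw [if_neg (by omega), if_neg (by omega)]
      exact congrArg c (Fin.mk_eq_mk.mpr (by omega))
    rw [dif_pos (show i+1+1 < N+2 by omega), dif_pos (show i+1 < N+2 by omega)]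
    exact congrArg Bool.toNat hthis
  rw [Finset.sum_congr rfl fmain, e0, e1, f0, f1]

private def wcfg (n : ℕ) [NeZero n] (d : Fin n → Bool) (t : ℕ) : Fin n → Bool :=
  fun i => if (i:ℕ) = 0 then true
    else if (i:ℕ) ≤ t then
      d ⟨((i:ℕ) + (n - 1 - t)) % n, Nat.mod_lt _ (Nat.pos_of_ne_zero (NeZero.ne n))⟩
    else false

private lemma aux_wzero (n : ℕ) [NeZero n] (d : Fin n → Bool) :
    wcfg n d 0 = fun i : Fin n => decide ((i:ℕ) = 0) := by
  funext i
  show (if (i:ℕ) = 0 then true else if (i:ℕ) ≤ 0 then _ else false) = _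
  by_cases hi : (i:ℕ) = 0
  · rw [if_pos hi]; simp [hi]
  · rw [if_neg hi, if_neg (by omega)]; simp [hi]

private lemma aux_wlast (n : ℕ) [NeZero n] (hn : 4 ≤ n) (d : Fin n → Bool)
    (hd0 : d ⟨0, by linarith⟩ = true) : wcfg n d (n - 1) = d := by
  funext i
  rcases i with ⟨iv, hiv⟩
  show (if iv = 0 then true else if iv ≤ n - 1 then
      d ⟨(iv + (n - 1 - (n - 1))) % n, Nat.mod_lt _ (Nat.pos_of_ne_zero (NeZero.ne n))⟩
    else false) = d ⟨iv, hiv⟩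
  by_cases h0 : iv = 0
  · rw [if_pos h0]
    subst h0
    exact hd0.symm
  · rw [if_neg h0, if_pos (by omega)]
    refine congrArg d (Fin.mk_eq_mk.mpr ?_)
    have h1 : iv + (n - 1 - (n - 1)) = iv := by omega
    rw [h1, Nat.mod_eq_of_lt hiv]

private lemma aux_wstep (n : ℕ) [NeZero n] (hn : 4 ≤ n) (d : Fin n → Bool) (t : ℕ)
    (ht : t ≤ n - 2) :
    wcfg n d (t+1) = nxt n true
      (d ⟨(n - 1 - t) % n, Nat.mod_lt _ (Nat.pos_of_ne_zero (NeZero.ne n))⟩)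
      (wcfg n d t) := by
  funext i
  rcases i with ⟨iv, hiv⟩
  show (if iv = 0 then true else if iv ≤ t + 1 then
      d ⟨(iv + (n - 1 - (t+1))) % n, Nat.mod_lt _ (Nat.pos_of_ne_zero (NeZero.ne n))⟩
    else false)
    = (if iv = 0 then true else if iv = 1 then
        d ⟨(n - 1 - t) % n, Nat.mod_lt _ (Nat.pos_of_ne_zero (NeZero.ne n))⟩
      else wcfg n d t ⟨iv - 1, Nat.lt_of_le_of_lt (Nat.sub_le _ _) hiv⟩)
  by_cases h0 : iv = 0
  · rw [if_pos h0, if_pos h0]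
  · rw [if_neg h0, if_neg h0]
    by_cases h1 : iv = 1
    · rw [if_pos h1, if_pos (show iv ≤ t + 1 by omega)]
      exact congrArg d (Fin.mk_eq_mk.mpr (by congr 1; omega))
    · rw [if_neg h1]
      show (if iv ≤ t + 1 then
          d ⟨(iv + (n - 1 - (t+1))) % n, Nat.mod_lt _ (Nat.pos_of_ne_zero (NeZero.ne n))⟩
        else false)
        = (if iv - 1 = 0 then true else if iv - 1 ≤ t then
          d ⟨(iv - 1 + (n - 1 - t)) % n, Nat.mod_lt _ (Nat.pos_of_ne_zero (NeZero.ne n))⟩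
        else false)
      rw [if_neg (show ¬(iv - 1 = 0) by omega)]
      by_cases h2 : iv ≤ t + 1
      · rw [if_pos h2, if_pos (show iv - 1 ≤ t by omega)]
        exact congrArg d (Fin.mk_eq_mk.mpr (by congr 1; omega))
      · rw [if_neg h2, if_neg (show ¬(iv - 1 ≤ t) by omega)]

theorem stmt_9 (n : ℕ) (hn : 4 ≤ n)
    -- the two choice functions of each node
    (f : Fin n → Fin 2 → (Fin n → Bool) → Bool)
    (hcopy : ∀ (i : Fin n), 2 ≤ (i : ℕ) → ∀ (j : Fin 2) (c : Fin n → Bool),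
      f i j c = c ⟨(i : ℕ) - 1, Nat.lt_of_le_of_lt (Nat.sub_le _ _) i.2⟩)
    (h10 : ∀ c : Fin n → Bool, f ⟨0, by omega⟩ 0 c = c ⟨0, by omega⟩)
    (h11 : ∀ c : Fin n → Bool, f ⟨0, by omega⟩ 1 c = c ⟨n - 1, by omega⟩)
    (h20 : ∀ c : Fin n → Bool, f ⟨1, by omega⟩ 0 c = c ⟨n - 1, by omega⟩)
    (h21 : ∀ c : Fin n → Bool, f ⟨1, by omega⟩ 1 c = c ⟨0, by omega⟩)
    -- one parallel step with some individual selection of functions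
    (Step : (Fin n → Bool) → (Fin n → Bool) → Prop)
    (hStep : ∀ c d, Step c d ↔ ∃ J : Fin n → Fin 2, ∀ i, d i = f i (J i) c) :
    (∀ c d : Fin n → Bool,
        (∃ i, c i = true) → (∃ i, c i = false) →
        (∃ i, d i = true) → (∃ i, d i = false) →
        Relation.ReflTransGen Step c d) ∧
    (∀ d : Fin n → Bool, Step (fun _ => false) d → d = fun _ => false) ∧
    (∀ d : Fin n → Bool, Step (fun _ => true) d → d = fun _ => true) := by
  haveI : NeZero n := ⟨by omega⟩
  have fin2 : ∀ j : Fin 2, j = 0 ∨ j = 1 := by decide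
  -- the basic parallel step
  have hstep_nxt : ∀ (c : Fin n → Bool) (a0 a1 : Bool),
      (a0 = c ⟨0, by omega⟩ ∨ a0 = c ⟨n - 1, by omega⟩) →
      (a1 = c ⟨0, by omega⟩ ∨ a1 = c ⟨n - 1, by omega⟩) →
      Step c (nxt n a0 a1 c) := by
    intro c a0 a1 ha0 ha1
    rw [hStep]
    refine ⟨fun i => if i.val = 0 then (if a0 = c ⟨0, by omega⟩ then 0 else 1)
      else if i.val = 1 then (if a1 = c ⟨0, by omega⟩ then 1 else 0) else 0, ?_⟩
    intro i
    rcases i with ⟨iv, hiv⟩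
    by_cases hi0 : iv = 0
    · subst hi0
      show a0 = f ⟨0, hiv⟩ (if (0:ℕ) = 0 then (if a0 = c ⟨0, by omega⟩ then 0 else 1) else _) c
      rw [if_pos rfl]
      by_cases h : a0 = c ⟨0, by omega⟩
      · rw [if_pos h, h10]; exact h
      · rw [if_neg h, h11]
        rcases ha0 with h' | h'
        · exact absurd h' h
        · exact h'
    · by_cases hi1 : iv = 1
      · subst hi1
        show a1 = f ⟨1, hiv⟩ (if (1:ℕ) = 0 then _ else if (1:ℕ) = 1 then
          (if a1 = c ⟨0, by omega⟩ then 1 else 0) else 0) c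
        rw [if_neg (by omega), if_pos rfl]
        by_cases h : a1 = c ⟨0, by omega⟩
        · rw [if_pos h, h21]; exact h
        · rw [if_neg h, h20]
          rcases ha1 with h' | h'
          · exact absurd h' h
          · exact h'
      · show (if iv = 0 then a0 else if iv = 1 then a1 else _) = f ⟨iv, hiv⟩ _ c
        rw [if_neg hi0, if_neg hi1, hcopy ⟨iv, hiv⟩ (show 2 ≤ iv by omega)]
  -- rotation as an nxt step
  have hrot_eq : ∀ c : Fin n → Bool,
      nxt n (c ⟨n - 1, by omega⟩) (c ⟨0, by omega⟩) c = rotf n c := by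
    intro c
    funext i
    have hs := aux_sub_one n (by omega) i
    show (if (i:ℕ) = 0 then c ⟨n-1, by omega⟩ else if (i:ℕ) = 1 then c ⟨0, by omega⟩
      else c ⟨(i:ℕ) - 1, Nat.lt_of_le_of_lt (Nat.sub_le _ _) i.2⟩) = c (i - 1)
    by_cases h0 : (i:ℕ) = 0
    · rw [if_pos h0]
      exact congrArg c (Fin.ext (by rw [hs, if_pos h0]))
    · rw [if_neg h0]
      by_cases h1 : (i:ℕ) = 1
      · rw [if_pos h1]
        exact congrArg c (Fin.ext (show (0:ℕ) = ((i - 1 : Fin n)).val by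
          rw [hs, if_neg h0]; omega))
      · rw [if_neg h1]
        exact congrArg c (Fin.ext (by rw [hs, if_neg h0]))
  have hstep_rot : ∀ c, Step c (rotf n c) := fun c =>
    hrot_eq c ▸ hstep_nxt c _ _ (Or.inr rfl) (Or.inl rfl)
  have hreach_iter : ∀ (k : ℕ) (c : Fin n → Bool),
      Relation.ReflTransGen Step c ((rotf n)^[k] c) := by
    intro k c
    induction k with
    | zero => exact .refl
    | succ k ih => rw [Function.iterate_succ_apply']; exact ih.tail (hstep_rot _)
  -- flushing to the base configuration
  have flush : ∀ (k : ℕ) (c : Fin n → Bool), mm n c = k →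
      (∃ i, c i = true) → (∃ i, c i = false) →
      Relation.ReflTransGen Step c (fun i : Fin n => decide ((i:ℕ) = 0)) := by
    intro k
    induction k using Nat.strong_induction_on with
    | _ k ih =>
      intro c hm ht hf
      obtain ⟨p, hp⟩ := ht
      obtain ⟨q, hq⟩ := hf
      by_cases hk1 : k = 1
      · subst hk1
        have huniq : ∀ r, c r = true → r = p := fun r hr => aux_unique n c hm r p hr hp
        have heq : (rotf n)^[n - p.val] c = fun i : Fin n => decide ((i:ℕ) = 0) := by
          funext i
          rw [aux_iter, aux_neg, sub_neg_eq_add]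
          by_cases hi : (i:ℕ) = 0
          · have hiz : i = 0 := Fin.ext (by rw [hi, Fin.val_zero])
            rw [hiz, zero_add, hp]
            simp [Fin.val_zero]
          · have hne : i + p ≠ p := fun hcontra => hi (by
              have h0' : i = 0 := by rwa [add_eq_right] at hcontra
              rw [h0', Fin.val_zero])
            have hfalse : c (i + p) = false := by
              cases hcp : c (i + p)
              · rfl
              · exact absurd (huniq _ hcp) hne
            rw [hfalse]
            simp [hi]
        exact heq ▸ hreach_iter (n - p.val) c
      · obtain ⟨j, hj1, hj2⟩ := aux_adj n c p q hp hq
        set t : Fin n := j + 1 with ht'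
        have hc' : ∀ i, (rotf n)^[n - t.val] c i = c (i + t) := by
          intro i; rw [aux_iter, aux_neg, sub_neg_eq_add]
        set c' := (rotf n)^[n - t.val] c with hc'def
        have hz : (⟨0, by omega⟩ : Fin n) = 0 := Fin.ext (by rw [Fin.val_zero])
        have hc'0 : c' ⟨0, by omega⟩ = false := by
          rw [hc', hz, zero_add]; exact hj2
        have hlast : (⟨n - 1, by omega⟩ : Fin n) = -1 := by
          open Fin.NatCast in
          have h1 : ((n - (1:Fin n).val : ℕ) : Fin n) = -1 := aux_neg n 1
          have hv1 : (1:Fin n).val = 1 := by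
            rw [Fin.val_one' n]; exact Nat.mod_eq_of_lt (by omega)
          rw [hv1] at h1
          rw [← h1]
          exact Fin.ext (by rw [Fin.val_natCast]; exact (Nat.mod_eq_of_lt (by omega)).symm)
        have hc'l : c' ⟨n - 1, by omega⟩ = true := by
          rw [hc', hlast]
          have hjj : (-1 : Fin n) + t = j := by rw [ht']; abel
          rw [hjj]; exact hj1
        have hmc' : mm n c' = k := by
          rw [← hm, hc'def]
          open Fin.NatCast in
          have hfe : (rotf n)^[n - t.val] c = fun i => c (i - ((n - t.val : ℕ) : Fin n)) :=
            funext fun i => aux_iter n (n - t.val) c i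
          rw [hfe]
          exact aux_shift n c _
        have hstep1 : Step c' (nxt n false false c') :=
          hstep_nxt c' false false (Or.inl hc'0.symm) (Or.inl hc'0.symm)
        have hdrop := aux_drop n hn c' hc'0 hc'l
        have hk2 : 2 ≤ k := by
          have := aux_one_le n c p hp; omega
        have hmd : mm n (nxt n false false c') = k - 1 := by omega
        have hdt : ∃ i, (nxt n false false c') i = true := aux_exists_true n _ (by omega)
        have hdf : ∃ i, (nxt n false false c') i = false := ⟨⟨0, by omega⟩, by simp [nxt]⟩
        have hrest := ih (k - 1) (by omega) _ hmd hdt hdf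
        exact (hreach_iter (n - t.val) c).trans (Relation.ReflTransGen.head hstep1 hrest)
  have hz0 : (⟨0, by omega⟩ : Fin n) = 0 := Fin.ext (by rw [Fin.val_zero])
  -- building any configuration with true at position 0 from the base
  have build : ∀ dd : Fin n → Bool, dd ⟨0, by omega⟩ = true →
      Relation.ReflTransGen Step (fun i : Fin n => decide ((i:ℕ) = 0)) dd := by
    intro dd hdd
    have hreachw : ∀ t, t ≤ n - 1 →
        Relation.ReflTransGen Step (fun i : Fin n => decide ((i:ℕ) = 0)) (wcfg n dd t) := by
      intro t
      induction t with
      | zero => intro _; rw [aux_wzero]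
      | succ t ih =>
        intro hts
        have hprev := ih (by omega)
        have hwz : wcfg n dd t ⟨0, by omega⟩ = true := by
          show (if (0:ℕ) = 0 then true else _) = true
          rw [if_pos rfl]
        have hwl : wcfg n dd t ⟨n - 1, by omega⟩ = false := by
          show (if (n-1:ℕ) = 0 then true else if (n-1:ℕ) ≤ t then _ else false) = false
          rw [if_neg (by omega), if_neg (by omega)]
        have hsv : Step (wcfg n dd t) (wcfg n dd (t+1)) := by
          rw [aux_wstep n hn dd t (by omega)]
          apply hstep_nxt
          · exact Or.inl hwz.symm
          · cases hb : dd ⟨(n - 1 - t) % n, Nat.mod_lt _ (Nat.pos_of_ne_zero (NeZero.ne n))⟩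
            · exact Or.inr (by rw [hwl])
            · exact Or.inl (by rw [hwz])
        exact hprev.tail hsv
    have hfin := hreachw (n-1) (le_refl _)
    rwa [aux_wlast n hn dd hdd] at hfin
  refine ⟨?_, ?_, ?_⟩
  · -- reachability between non-constant configurations
    intro c d hct hcf hdt _
    have h1 := flush (mm n c) c rfl hct hcf
    obtain ⟨p, hp⟩ := hdt
    have hd' : (fun i : Fin n => d (i + p)) ⟨0, by omega⟩ = true := by
      show d (⟨0, by omega⟩ + p) = true
      rw [hz0, zero_add]
      exact hp
    have h2 := build (fun i : Fin n => d (i + p)) hd'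
    have h3 : (rotf n)^[p.val] (fun i : Fin n => d (i + p)) = d := by
      funext i
      rw [aux_iter, Fin.cast_val_eq_self]
      show d (i - p + p) = d i
      rw [sub_add_cancel]
    have h4 := hreach_iter p.val (fun i : Fin n => d (i + p))
    rw [h3] at h4
    exact h1.trans (h2.trans h4)
  · -- all-zeros is fixed
    intro d hstepd
    rw [hStep] at hstepd
    obtain ⟨J, hJ⟩ := hstepd
    funext i
    show d i = false
    rw [hJ i]
    rcases i with ⟨iv, hiv⟩
    by_cases h2 : 2 ≤ iv
    · rw [hcopy ⟨iv, hiv⟩ h2]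
    · by_cases h0 : iv = 0
      · subst h0
        rcases fin2 (J ⟨0, hiv⟩) with hj | hj <;> rw [hj]
        · exact h10 _
        · exact h11 _
      · have h1' : iv = 1 := by omega
        subst h1'
        rcases fin2 (J ⟨1, hiv⟩) with hj | hj <;> rw [hj]
        · exact h20 _
        · exact h21 _
  · -- all-ones is fixed
    intro d hstepd
    rw [hStep] at hstepd
    obtain ⟨J, hJ⟩ := hstepd
    funext i
    show d i = true
    rw [hJ i]
    rcases i with ⟨iv, hiv⟩
    by_cases h2 : 2 ≤ iv
    · rw [hcopy ⟨iv, hiv⟩ h2]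
    · by_cases h0 : iv = 0
      · subst h0
        rcases fin2 (J ⟨0, hiv⟩) with hj | hj <;> rw [hj]
        · exact h10 _
        · exact h11 _
      · have h1' : iv = 1 := by omega
        subst h1'
        rcases fin2 (J ⟨1, hiv⟩) with hj | hj <;> rw [hj]
        · exact h20 _
        · exact h21 _
end

section
/- Let F be an (n,k) multiple-choice DT-BFDS with individual function selection. Then each step of the asynchronous schedule (where an arbitrary subset S of nodes is chosen, partitioned into groups updated one group at a time, with nodes in the same group updating concurrently) is simulated by at most n steps of the (n, k+1)-choice parallel system F' obtained by adding the identity function as the (k+1)-st choice for every node: for every asynchronous step taking configuration a to configuration b, there is a sequence of at most n parallel steps of F' taking a to b. -/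
/-- `chain r l a b`: there is a sequence of exactly `l` steps of the relation `r`
leading from `a` to `b`. -/
def chain {α : Type*} (r : α → α → Prop) : ℕ → α → α → Prop
  | 0 => fun a b => a = b
  | l + 1 => fun a b => ∃ c, r a c ∧ chain r l c b

/-- Update the nodes in the group `S` concurrently, using the selection `g`
of function indices, all other nodes keeping their states. -/
def applyGroup {n k : ℕ} (f : Fin n → Fin k → (Fin n → Bool) → Bool)
    (S : Finset (Fin n)) (g : Fin n → Fin k) (c : Fin n → Bool) : Fin n → Bool :=
  fun i => if i ∈ S then f i (g i) c else c i

/-- One asynchronous step of the `(n,k)` system `f`: a sequence of mutually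
disjoint nonempty groups of nodes is chosen and the groups update one at a time,
nodes within a group updating concurrently. -/
def AsyncStep {n k : ℕ} (f : Fin n → Fin k → (Fin n → Bool) → Bool)
    (a b : Fin n → Bool) : Prop :=
  ∃ (m : ℕ), m ≤ n ∧ ∃ S : Fin m → Finset (Fin n),
    (∀ h, (S h).Nonempty) ∧
    (∀ h h', h ≠ h' → Disjoint (S h) (S h')) ∧
    ∃ g : Fin n → Fin k,
      b = (List.ofFn S).foldl (fun c T => applyGroup f T g c) a

/-- One parallel step of the `(n, k+1)`-choice system `F'` obtained by adding
the identity function as the `(k+1)`-st choice for every node. -/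
def PStep {n k : ℕ} (f : Fin n → Fin k → (Fin n → Bool) → Bool)
    (a b : Fin n → Bool) : Prop :=
  ∃ J : Fin n → Fin (k + 1), ∀ i,
    b i = if h : (J i : ℕ) < k then f i ⟨J i, h⟩ a else a i

lemma pstep_applyGroup {n k : ℕ} (f : Fin n → Fin k → (Fin n → Bool) → Bool)
    (T : Finset (Fin n)) (g : Fin n → Fin k) (c : Fin n → Bool) :
    PStep f c (applyGroup f T g c) := by
  refine ⟨fun i => if i ∈ T then (g i).castSucc else Fin.last k, fun i => ?_⟩
  by_cases hi : i ∈ T <;> simp [applyGroup, hi, (g i).isLt, Fin.lt_irrefl]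

lemma chain_foldl {n k : ℕ} (f : Fin n → Fin k → (Fin n → Bool) → Bool)
    (g : Fin n → Fin k) (L : List (Finset (Fin n))) (a : Fin n → Bool) :
    chain (PStep f) L.length a (L.foldl (fun c T => applyGroup f T g c) a) := by
  induction L generalizing a with
  | nil => rfl
  | cons T L ih => exact ⟨_, pstep_applyGroup f T g a, ih _⟩

theorem stmt_10 (n k : ℕ) (f : Fin n → Fin k → (Fin n → Bool) → Bool)
    (a b : Fin n → Bool) (h : AsyncStep f a b) :
    ∃ l : ℕ, l ≤ n ∧ chain (PStep f) l a b := by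
  obtain ⟨m, hm, S, -, -, g, rfl⟩ := h
  refine ⟨m, hm, ?_⟩
  have := chain_foldl f g (List.ofFn S) a
  simpa using this
end

section
/- Let F = (f_1, ..., f_n) be an n-node system and π a permutation of Fin n. Define the sequential update F_π(c) = f̃_{π(n)}( ... f̃_{π(2)}(f̃_{π(1)}(c)) ... ), where f̃_i replaces only coordinate i of its input by f_i applied to that input. If the dependency structure is such that f_{π(j)} does not depend on any coordinate π(1), ..., π(j-1) for all j, then the sequential update agrees with the parallel update: F_π(c) = (f_1(c), ..., f_n(c)) for every configuration c. -/
/-- Sequential update according to the permutation `π`: apply the completions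
`f̃_{π 1}, f̃_{π 2}, …, f̃_{π n}` in this order, where the completion of `f_i`
replaces only coordinate `i` of its input by `f_i` applied to that input. -/
def seqUpdate {n : ℕ} (f : Fin n → (Fin n → Bool) → Bool) (π : Equiv.Perm (Fin n))
    (c : Fin n → Bool) : Fin n → Bool :=
  (List.ofFn (fun j : Fin n => π j)).foldl
    (fun c i => Function.update c i (f i c)) c

lemma aux_indep (n : ℕ) (f : Fin n → (Fin n → Bool) → Bool) (π : Equiv.Perm (Fin n))
    (hdep : ∀ j j' : Fin n, j' < j →
      ∀ c c' : Fin n → Bool, (∀ m : Fin n, m ≠ π j' → c m = c' m) →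
        f (π j) c = f (π j) c') :
    ∀ k : ℕ, ∀ j : Fin n, k ≤ (j : ℕ) → ∀ c c' : Fin n → Bool,
      (∀ m : Fin n, (∀ j' : Fin n, (j' : ℕ) < k → m ≠ π j') → c' m = c m) →
      f (π j) c' = f (π j) c := by
  intro k
  induction k with
  | zero =>
    intro j _ c c' h
    have : c' = c := funext fun m => h m (fun j' hj' => absurd hj' (Nat.not_lt_zero _))
    rw [this]
  | succ k ih =>
    intro j hj c c' h
    have hkn : k < n := lt_trans (Nat.lt_of_succ_le hj) j.isLt
    set kf : Fin n := ⟨k, hkn⟩ with hkf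
    have hkj : kf < j := Nat.lt_of_succ_le hj
    set c'' : Fin n → Bool := Function.update c' (π kf) (c (π kf)) with hc''
    have h1 : f (π j) c' = f (π j) c'' := by
      apply hdep j kf hkj
      intro m hm
      rw [hc'', Function.update_of_ne hm]
    rw [h1]
    apply ih j (le_of_lt (Nat.lt_of_succ_le hj))
    intro m hm
    by_cases hmk : m = π kf
    · rw [hc'', hmk, Function.update_self]
    · rw [hc'', Function.update_of_ne hmk]
      apply h
      intro j' hj'
      rcases Nat.lt_succ_iff_lt_or_eq.mp hj' with h' | h'
      · exact hm j' h'
      · have : j' = kf := Fin.ext h'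
        rw [this]; exact hmk

theorem stmt_17 (n : ℕ) (f : Fin n → (Fin n → Bool) → Bool) (π : Equiv.Perm (Fin n))
    -- f (π j) does not depend on any of the coordinates π 1, …, π (j-1)
    (hdep : ∀ j j' : Fin n, j' < j →
      ∀ c c' : Fin n → Bool, (∀ m : Fin n, m ≠ π j' → c m = c' m) →
        f (π j) c = f (π j) c') :
    ∀ c : Fin n → Bool, seqUpdate f π c = fun i => f i c := by
  intro c
  have key : ∀ k : ℕ, k ≤ n →
      ((List.ofFn (fun j : Fin n => π j)).take k).foldl
        (fun c i => Function.update c i (f i c)) c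
      = fun i => if ∃ j : Fin n, (j : ℕ) < k ∧ π j = i then f i c else c i := by
    intro k
    induction k with
    | zero =>
      intro _
      simp
    | succ k ih =>
      intro hk
      have hkn : k < n := hk
      have htake : (List.ofFn (fun j : Fin n => π j)).take (k + 1)
          = (List.ofFn (fun j : Fin n => π j)).take k ++ [π ⟨k, hkn⟩] := by
        rw [List.take_succ]
        congr 1
        rw [List.getElem?_ofFn]
        simp [List.ofFnNthVal, hkn]
      rw [htake, List.foldl_append, ih (le_of_lt hkn)]
      simp only [List.foldl_cons, List.foldl_nil]
      funext i
      by_cases hi : i = π ⟨k, hkn⟩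
      · subst hi
        rw [Function.update_self]
        have hnot : ¬ ∃ j : Fin n, (j : ℕ) < k ∧ π j = π ⟨k, hkn⟩ := by
          rintro ⟨j, hj, hpj⟩
          have : j = ⟨k, hkn⟩ := π.injective hpj
          rw [this] at hj
          exact absurd hj (lt_irrefl k)
        have hpos : ∃ j : Fin n, (j : ℕ) < k + 1 ∧ π j = π ⟨k, hkn⟩ :=
          ⟨⟨k, hkn⟩, Nat.lt_succ_self k, rfl⟩
        rw [if_pos hpos]
        apply aux_indep n f π hdep k ⟨k, hkn⟩ le_rfl
        intro m hm
        rw [if_neg]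
        rintro ⟨j', hj', hpj'⟩
        exact hm j' hj' hpj'.symm
      · rw [Function.update_of_ne hi]
        congr 1
        simp only [eq_iff_iff]
        constructor
        · rintro ⟨j, hj, hpj⟩; exact ⟨j, Nat.lt_succ_of_lt hj, hpj⟩
        · rintro ⟨j, hj, hpj⟩
          refine ⟨j, ?_, hpj⟩
          rcases Nat.lt_succ_iff_lt_or_eq.mp hj with h' | h'
          · exact h'
          · exfalso; apply hi; rw [← hpj]; congr 1; exact Fin.ext h'
  have hfull := key n le_rfl
  rw [List.take_of_length_le (by simp)] at hfull
  unfold seqUpdate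
  rw [hfull]
  funext i
  rw [if_pos ⟨π.symm i, (π.symm i).isLt, π.apply_symm_apply i⟩]
end
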